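/- There is a bijection between the set of pairs (S, π) where S ⊆ [n] and π is a set partition of S, and the set of set partitions of [n+1]. -/

import Mathlib

/-- `(a, b)` is an arc of the set partition `π`: `a < b` lie in a common block
with no element of that block strictly between them. -/
def IsArc {s : Finset ℕ} (π : Finpartition s) (a b : ℕ) : Prop :=
  a < b ∧ ∃ B ∈ π.parts, a ∈ B ∧ b ∈ B ∧ ∀ x ∈ B, ¬(a < x ∧ x < b)

/-- Enhanced (possibly trivial) arc: a genuine arc, or a trivial arc at a singleton block. -/
def IsEArc {s : Finset ℕ} (π : Finpartition s) (a b : ℕ) : Prop :=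
  IsArc π a b ∨ (a = b ∧ {a} ∈ π.parts)

/-- `π` has an enhanced `k`-crossing: `a₁ < ⋯ < a_k ≤ b₁ < ⋯ < b_k` with each
`(aᵢ, bᵢ)` a (possibly trivial) arc. -/
def EnhCross {s : Finset ℕ} (π : Finpartition s) (k : ℕ) : Prop :=
  ∃ a b : Fin k → ℕ, StrictMono a ∧ StrictMono b ∧
    (∀ i j, a i ≤ b j) ∧ ∀ i, IsEArc π (a i) (b i)

/-- `π` has a classical `k`-crossing: `a₁ < ⋯ < a_k < b₁ < ⋯ < b_k` with each
`(aᵢ, bᵢ)` an arc. -/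
def ClCross {s : Finset ℕ} (π : Finpartition s) (k : ℕ) : Prop :=
  ∃ a b : Fin k → ℕ, StrictMono a ∧ StrictMono b ∧
    (∀ i j, a i < b j) ∧ ∀ i, IsArc π (a i) (b i)

/-- `π` has an enhanced `k`-nesting: `a₁ < ⋯ < a_k ≤ b_k < ⋯ < b₁` with each
`(aᵢ, bᵢ)` a (possibly trivial) arc. -/
def EnhNest {s : Finset ℕ} (π : Finpartition s) (k : ℕ) : Prop :=
  ∃ a b : Fin k → ℕ, StrictMono a ∧ StrictAnti b ∧
    (∀ i j, a i ≤ b j) ∧ ∀ i, IsEArc π (a i) (b i)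

/-- `π` has a classical `k`-nesting: additionally `a_k < b_k`. -/
def ClNest {s : Finset ℕ} (π : Finpartition s) (k : ℕ) : Prop :=
  ∃ a b : Fin k → ℕ, StrictMono a ∧ StrictAnti b ∧
    (∀ i j, a i < b j) ∧ ∀ i, IsArc π (a i) (b i)

/-- `σ = π̂`: the arcs of `σ` are exactly `(v, w+1)` for arcs `(v, w)` of `π`
together with `(u, u+1)` for singleton blocks `{u}` of `π`. -/
def HatRel {s t : Finset ℕ} (π : Finpartition s) (σ : Finpartition t) : Prop :=
  ∀ x y, IsArc σ x y ↔
    ((∃ v w, IsArc π v w ∧ x = v ∧ y = w + 1) ∨ ({x} ∈ π.parts ∧ y = x + 1))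

open Finset

section Aux
variable (n : ℕ)

lemma aux_hb (S : Finset ℕ) : (Icc 1 n \ S) ∪ {n+1} ≠ (⊥ : Finset ℕ) := by
  intro h
  have : n + 1 ∈ (Icc 1 n \ S) ∪ {n+1} := by simp
  rw [h] at this
  simp at this

lemma aux_disj {S : Finset ℕ} (hS : S ⊆ Icc 1 n) :
    Disjoint S ((Icc 1 n \ S) ∪ {n+1}) := by
  rw [Finset.disjoint_left]
  intro x hx hx'
  have hx2 := hS hx
  rw [mem_Icc] at hx2
  rcases mem_union.1 hx' with h | h
  · exact (mem_sdiff.1 h).2 hx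
  · rw [mem_singleton] at h
    omega

lemma aux_sup {S : Finset ℕ} (hS : S ⊆ Icc 1 n) :
    S ⊔ ((Icc 1 n \ S) ∪ {n+1}) = Icc 1 (n+1) := by
  ext x
  simp only [sup_eq_union, mem_union, mem_sdiff, mem_singleton, mem_Icc]
  constructor
  · rintro (h | (⟨⟨h1, h2⟩, _⟩ | rfl))
    · have := hS h; rw [mem_Icc] at this; omega
    · omega
    · omega
  · rintro ⟨h1, h2⟩
    by_cases hx : x ∈ S
    · exact Or.inl hx
    · by_cases hxe : x = n + 1
      · exact Or.inr (Or.inr hxe)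
      · exact Or.inr (Or.inl ⟨⟨h1, by omega⟩, hx⟩)

/-- The forward map: extend a partition of `S ⊆ [n]` by the block
`([n] \ S) ∪ {n+1}`. -/
def fwd (p : Σ S : {S : Finset ℕ // S ⊆ Finset.Icc 1 n}, Finpartition S.val) :
    Finpartition (Finset.Icc 1 (n+1)) :=
  p.2.extend (aux_hb n p.1.val) (aux_disj n p.1.2) (aux_sup n p.1.2)

lemma fwd_parts (p : Σ S : {S : Finset ℕ // S ⊆ Finset.Icc 1 n}, Finpartition S.val) :
    (fwd n p).parts = insert ((Icc 1 n \ p.1.val) ∪ {n+1}) p.2.parts := rfl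

lemma not_succ_mem_part {S : Finset ℕ} (hS : S ⊆ Icc 1 n) (π : Finpartition S)
    {C : Finset ℕ} (hC : C ∈ π.parts) : n + 1 ∉ C := by
  intro h
  have := hS (π.le hC h)
  rw [mem_Icc] at this
  omega

lemma key_sdiff {S : Finset ℕ} (hS : S ⊆ Icc 1 n) :
    Icc 1 n \ ((Icc 1 n \ S) ∪ {n+1}) = S := by
  ext x
  simp only [mem_sdiff, mem_union, mem_singleton, mem_Icc]
  constructor
  · rintro ⟨h1, h2⟩
    by_contra hx
    exact h2 (Or.inl ⟨h1, hx⟩)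
  · intro hx
    have := hS hx
    rw [mem_Icc] at this
    refine ⟨this, ?_⟩
    rintro (⟨_, hc⟩ | hc)
    · exact hc hx
    · omega

lemma fwd_inj : Function.Injective (fwd n) := by
  rintro ⟨⟨S₁, h₁⟩, π₁⟩ ⟨⟨S₂, h₂⟩, π₂⟩ h
  have hparts : insert ((Icc 1 n \ S₁) ∪ {n+1}) π₁.parts
      = insert ((Icc 1 n \ S₂) ∪ {n+1}) π₂.parts := congrArg Finpartition.parts h
  have hmem : (Icc 1 n \ S₁) ∪ {n+1} ∈ insert ((Icc 1 n \ S₂) ∪ {n+1}) π₂.parts :=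
    hparts ▸ mem_insert_self _ _
  have hbb : (Icc 1 n \ S₁) ∪ {n+1} = (Icc 1 n \ S₂) ∪ {n+1} := by
    rcases mem_insert.1 hmem with h' | h'
    · exact h'
    · exact absurd (mem_union_right _ (mem_singleton_self _))
        (not_succ_mem_part n h₂ π₂ h')
  have hSS : S₁ = S₂ := by
    rw [← key_sdiff n h₁, ← key_sdiff n h₂, hbb]
  subst hSS
  have hnotmem : ∀ (π : Finpartition S₁), (Icc 1 n \ S₁) ∪ {n+1} ∉ π.parts := fun π hm =>
    not_succ_mem_part n h₁ π hm (mem_union_right _ (mem_singleton_self _))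
  have hpp : π₁.parts = π₂.parts := by
    have e := congrArg (fun s => Finset.erase s ((Icc 1 n \ S₁) ∪ {n+1})) hparts
    simpa only [Finset.erase_insert (hnotmem π₁), Finset.erase_insert (hnotmem π₂)] using e
  have hππ : π₁ = π₂ := Finpartition.ext hpp
  subst hππ
  rfl

lemma fwd_surj : Function.Surjective (fwd n) := by
  intro σ
  have hmem : n + 1 ∈ Icc 1 (n+1) := by simp
  have hB : σ.part (n+1) ∈ σ.parts := σ.part_mem.2 hmem
  have hnB : n + 1 ∈ σ.part (n+1) := σ.mem_part hmem
  have hBsub : σ.part (n+1) ⊆ Icc 1 (n+1) := σ.le hB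
  have hS : Icc 1 (n+1) \ σ.part (n+1) ⊆ Icc 1 n := by
    intro x hx
    rw [mem_sdiff, mem_Icc] at hx
    have : x ≠ n + 1 := fun h => hx.2 (h ▸ hnB)
    rw [mem_Icc]
    omega
  refine ⟨⟨⟨Icc 1 (n+1) \ σ.part (n+1), hS⟩, σ.avoid (σ.part (n+1))⟩, ?_⟩
  apply Finpartition.ext
  rw [fwd_parts]
  have hbB : (Icc 1 n \ (Icc 1 (n+1) \ σ.part (n+1))) ∪ {n+1} = σ.part (n+1) := by
    ext x
    simp only [mem_union, mem_sdiff, mem_singleton, mem_Icc]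
    constructor
    · rintro (⟨h1, h2⟩ | rfl)
      · by_contra hx
        exact h2 ⟨⟨h1.1, by omega⟩, hx⟩
      · exact hnB
    · intro hx
      have hx1 := hBsub hx
      rw [mem_Icc] at hx1
      by_cases hxe : x = n + 1
      · exact Or.inr hxe
      · exact Or.inl ⟨⟨hx1.1, by omega⟩, fun h => h.2 hx⟩
  have havoid : (σ.avoid (σ.part (n+1))).parts = σ.parts.erase (σ.part (n+1)) := by
    ext C
    rw [Finpartition.mem_avoid, mem_erase]
    constructor
    · rintro ⟨d, hd, hdB, rfl⟩
      have hne : d ≠ σ.part (n+1) := fun h => hdB (h ▸ le_refl _)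
      have hdisj : Disjoint d (σ.part (n+1)) := σ.disjoint hd hB hne
      rw [sdiff_eq_self_of_disjoint hdisj]
      exact ⟨hne, hd⟩
    · rintro ⟨hne, hC⟩
      have hdisj : Disjoint C (σ.part (n+1)) := σ.disjoint hC hB hne
      refine ⟨C, hC, ?_, sdiff_eq_self_of_disjoint hdisj⟩
      intro hle
      exact σ.ne_bot hC (hdisj.eq_bot_of_le hle)
  rw [hbB, havoid, Finset.insert_erase hB]

end Aux

theorem stmt1 (n : ℕ) :
    Nonempty ((Σ S : {S : Finset ℕ // S ⊆ Finset.Icc 1 n}, Finpartition S.val) ≃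
      Finpartition (Finset.Icc 1 (n+1))) :=
  ⟨Equiv.ofBijective (fwd n) ⟨fwd_inj n, fwd_surj n⟩⟩
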